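/- Let U be a finite group, G = U ≀ C₂, N = U × U, H = {1,t}·{(u,u): u ∈ U}. Let V be an irreducible real G-inner-product-space containing a nonzero H-fixed vector w, with irreducible complex character χ restricting on N to φ × φ with φ = φ̄ ∈ Irr U and χ(t(u,v)) = ν₂(φ)·φ(uv). Then for every n = (x,y) ∈ N: ⟨w·n, w⟩/⟨w,w⟩ = φ(x⁻¹y)/φ(1). -/

import Mathlib

/-- The coordinate-swap automorphism of `U × U`. -/
def swapAut (U : Type) [Group U] : MulAut (U × U) :=
  { Equiv.prodComm U U with map_mul' := fun _ _ => rfl }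

/-- The action of `C₂` on `U × U` by swapping coordinates. -/
def wrAct (U : Type) [Group U] : Multiplicative (ZMod 2) →* MulAut (U × U) where
  toFun x := if x.toAdd = 0 then 1 else swapAut U
  map_one' := by simp
  map_mul' := by
    intro x y
    have h2 : ∀ z : ZMod 2, z = 0 ∨ z = 1 := by decide
    have hsq : swapAut U * swapAut U = 1 := MulEquiv.ext fun _ => rfl
    rcases h2 x.toAdd with hx | hx <;> rcases h2 y.toAdd with hy | hy <;>
      simp [toAdd_mul, hx, hy, hsq, (by decide : (1 + 1 : ZMod 2) = 0)]

/-- The wreath product `U ≀ C₂`: the semidirect product of `C₂ = {1,t}` acting on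
`N = U × U` by swapping coordinates. -/
abbrev Wr (U : Type) [Group U] :=
  SemidirectProduct (U × U) (Multiplicative (ZMod 2)) (wrAct U)

/-- The swapping element `t` of `U ≀ C₂`. -/
def tEl (U : Type) [Group U] : Wr U := SemidirectProduct.inr (Multiplicative.ofAdd 1)

/-- `χ : G → ℂ` is a (complex) character of `G`. -/
def IsChar (G : Type) [Group G] (χ : G → ℂ) : Prop :=
  ∃ (V : Type) (_ : AddCommGroup V) (_ : Module ℂ V) (_ : FiniteDimensional ℂ V)
    (τ : Representation ℂ G V), ∀ g, χ g = LinearMap.trace ℂ V (τ g)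

/-- `χ : G → ℂ` is an irreducible complex character of `G`. -/
def IsIrrChar (G : Type) [Group G] (χ : G → ℂ) : Prop :=
  ∃ (V : Type) (_ : AddCommGroup V) (_ : Module ℂ V) (_ : FiniteDimensional ℂ V)
    (τ : Representation ℂ G V), Nontrivial V ∧
      (∀ W : Submodule ℂ V, (∀ g, ∀ x ∈ W, τ g x ∈ W) → W = ⊥ ∨ W = ⊤) ∧
      ∀ g, χ g = LinearMap.trace ℂ V (τ g)

/-- The character of `U ≀ C₂` induced from the character `φ × θ` of `N = U × U`. -/
noncomputable def indChar {U : Type} [Group U] (φ θ : U → ℂ) : Wr U → ℂ :=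
  fun g => (Nat.card (U × U) : ℂ)⁻¹ *
    ∑ᶠ x : Wr U, if (x * g * x⁻¹).right = 1
      then φ ((x * g * x⁻¹).left.1) * θ ((x * g * x⁻¹).left.2) else 0

open scoped InnerProductSpace

/-- The subgroup `H = {1,t}·{(u,u) : u ∈ U}` of `U ≀ C₂`. -/
def Hdiag (U : Type) [Group U] : Subgroup (Wr U) :=
  Subgroup.closure ({tEl U} ∪ Set.range (fun u : U => SemidirectProduct.inl (u, u)))

open LinearMap in
lemma keyCharIdentity {U : Type} [Group U] [Fintype U] (φ : U → ℂ)
    (hφ : IsIrrChar U φ) (hφinv : ∀ u : U, φ u⁻¹ = φ u) :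
    (∀ a b : U, φ (a * b) = φ (b * a)) ∧ (φ 1 ≠ 0) ∧
    (∑ u : U, φ u * φ u = (Fintype.card U : ℂ)) ∧
    (∀ a : U, ∑ u : U, φ u * φ (a * u) = (Fintype.card U : ℂ) * φ a / φ 1) := by
  classical
  obtain ⟨W, iA, iM, iF, τ, hnt, hsim, htr⟩ := hφ
  have hcomm : ∀ a b : U, φ (a * b) = φ (b * a) := by
    intro a b
    rw [htr, htr, map_mul τ, map_mul τ, trace_mul_comm]
  set n : ℕ := Module.finrank ℂ W with hn
  have hnpos : 0 < n := Module.finrank_pos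
  have hφ1 : φ 1 = (n : ℂ) := by rw [htr, map_one, trace_one]
  have hφ1ne : φ 1 ≠ 0 := by
    rw [hφ1]; exact_mod_cast Nat.cast_ne_zero.mpr hnpos.ne'
  have hnne : (n : ℂ) ≠ 0 := by rwa [hφ1] at hφ1ne
  -- Schur's lemma
  have schur : ∀ B : Module.End ℂ W, (∀ u : U, τ u * B = B * τ u) →
      B = (trace ℂ W B / n) • 1 := by
    intro B hB
    obtain ⟨c, hc⟩ := Module.End.exists_eigenvalue B
    have hK := hsim (Module.End.eigenspace B c) ?_
    · rcases hK with hK | hK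
      · exact absurd hK hc
      · have hBx : ∀ x : W, B x = c • x := by
          intro x
          have : x ∈ Module.End.eigenspace B c := hK ▸ Submodule.mem_top
          exact Module.End.mem_eigenspace_iff.mp this
        have hBeq : B = c • 1 := by
          ext x; simpa using hBx x
        have htrB : trace ℂ W B = c * n := by
          rw [hBeq, map_smul, trace_one]; simp [mul_comm, hn]
        rw [htrB, hBeq]
        congr 1
        field_simp
    · intro g x hx
      have hx' : B x = c • x := Module.End.mem_eigenspace_iff.mp hx
      refine Module.End.mem_eigenspace_iff.mpr ?_
      have := congrArg (fun f : Module.End ℂ W => f x) (hB g)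
      simp only [Module.End.mul_apply] at this
      rw [← this, hx', map_smul]
  -- averaging lemma
  have avg : ∀ A : Module.End ℂ W, ∑ u : U, τ u * A * τ u⁻¹
      = (((Fintype.card U : ℂ)) * (trace ℂ W A / n)) • 1 := by
    intro A
    set S : Module.End ℂ W := ∑ u : U, τ u * A * τ u⁻¹ with hS
    have hScomm : ∀ v : U, τ v * S = S * τ v := by
      intro v
      have h1 : τ v * S = ∑ u : U, τ (v * u) * A * τ u⁻¹ := by
        rw [hS, Finset.mul_sum]
        refine Finset.sum_congr rfl fun u _ => ?_
        rw [map_mul τ, mul_assoc, mul_assoc, mul_assoc]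
      have h2 : S * τ v = ∑ u : U, τ u * A * τ (u⁻¹ * v) := by
        rw [hS, Finset.sum_mul]
        refine Finset.sum_congr rfl fun u _ => ?_
        rw [map_mul τ, mul_assoc, mul_assoc]
      rw [h1, h2]
      exact Fintype.sum_equiv (Equiv.mulLeft v) _ _
        (fun u => by simp [Equiv.coe_mulLeft, mul_inv_rev, mul_assoc])
    have hStr : trace ℂ W S = (Fintype.card U : ℂ) * trace ℂ W A := by
      rw [hS, map_sum]
      have : ∀ u : U, trace ℂ W (τ u * A * τ u⁻¹) = trace ℂ W A := by
        intro u
        rw [trace_mul_comm, ← mul_assoc, ← map_mul τ, inv_mul_cancel, map_one, one_mul]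
      rw [Finset.sum_congr rfl fun u _ => this u, Finset.sum_const, Finset.card_univ,
        nsmul_eq_mul]
    rw [schur S hScomm, hStr]
    congr 1
    ring
  -- matrix picture
  set b : Module.Basis (Fin n) ℂ W := Module.finBasis ℂ W with hb
  set T : U → Matrix (Fin n) (Fin n) ℂ := fun u => LinearMap.toMatrix b b (τ u) with hT
  have htrT : ∀ u : U, φ u = Matrix.trace (T u) := by
    intro u
    rw [htr, trace_eq_matrix_trace ℂ b]
  have havgM : ∀ A : Matrix (Fin n) (Fin n) ℂ, ∑ u : U, T u * A * T u⁻¹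
      = (((Fintype.card U : ℂ)) * (Matrix.trace A / n)) • 1 := by
    intro A
    have h := avg (Matrix.toLin b b A)
    have h2 := congrArg (LinearMap.toMatrix b b) h
    rw [map_sum, map_smul] at h2
    have h3 : ∀ u : U, LinearMap.toMatrix b b (τ u * Matrix.toLin b b A * τ u⁻¹)
        = T u * A * T u⁻¹ := by
      intro u
      rw [LinearMap.toMatrix_mul, LinearMap.toMatrix_mul, LinearMap.toMatrix_toLin]
    have h4 : LinearMap.toMatrix b b (1 : Module.End ℂ W) = 1 := by
      rw [LinearMap.toMatrix_one]
    have h5 : trace ℂ W (Matrix.toLin b b A) = Matrix.trace A := by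
      rw [trace_eq_matrix_trace ℂ b, LinearMap.toMatrix_toLin]
    rw [Finset.sum_congr rfl fun u _ => h3 u] at h2
    rw [h2, h4, h5]
  -- entry lemma
  have hentry : ∀ (M N : Matrix (Fin n) (Fin n) ℂ) (i j : Fin n),
      (M * Matrix.single i j (1 : ℂ) * N) i j = M i i * N j j := by
    intro M N i j
    rw [Matrix.mul_apply]
    rw [Finset.sum_eq_single j]
    · rw [Matrix.mul_single_apply_same, mul_one]
    · intro k _ hk
      rw [Matrix.mul_single_apply_of_ne (hbj := hk), zero_mul]
    · intro h; exact absurd (Finset.mem_univ j) h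
  -- orthogonality: ∑ φ(u) φ(u⁻¹) = |U|
  have horthog : ∑ u : U, φ u * φ u⁻¹ = (Fintype.card U : ℂ) := by
    have hstep : ∀ i j : Fin n, ∑ u : U, T u i i * T u⁻¹ j j
        = if i = j then (Fintype.card U : ℂ) / n else 0 := by
      intro i j
      have h1 : ∀ u : U, T u i i * T u⁻¹ j j
          = (T u * Matrix.single i j (1 : ℂ) * T u⁻¹) i j :=
        fun u => (hentry (T u) (T u⁻¹) i j).symm
      rw [Finset.sum_congr rfl fun u _ => h1 u]
      rw [← Matrix.sum_apply i j Finset.univ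
        fun u => T u * Matrix.single i j (1 : ℂ) * T u⁻¹]
      rw [havgM (Matrix.single i j (1 : ℂ))]
      rw [Matrix.smul_apply]
      by_cases hij : i = j
      · subst hij
        rw [Matrix.trace_single_eq_same, Matrix.one_apply_eq, if_pos rfl]
        simp [div_eq_mul_inv, mul_comm]
      · rw [Matrix.trace_single_eq_of_ne (h := hij),
          Matrix.one_apply_ne hij, if_neg hij]
        simp
    calc ∑ u : U, φ u * φ u⁻¹ = ∑ u : U, (∑ i, T u i i) * (∑ j, T u⁻¹ j j) := by
          refine Finset.sum_congr rfl fun u _ => ?_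
          rw [htrT u, htrT u⁻¹]; rfl
      _ = ∑ u : U, ∑ i, ∑ j, T u i i * T u⁻¹ j j := by
          refine Finset.sum_congr rfl fun u _ => ?_
          rw [Finset.sum_mul_sum]
      _ = ∑ i, ∑ j, ∑ u : U, T u i i * T u⁻¹ j j := by
          rw [Finset.sum_comm]
          refine Finset.sum_congr rfl fun i _ => Finset.sum_comm
      _ = ∑ i : Fin n, (Fintype.card U : ℂ) / n := by
          refine Finset.sum_congr rfl fun i _ => ?_
          rw [Finset.sum_congr rfl fun j _ => hstep i j]
          simp
      _ = (Fintype.card U : ℂ) := by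
          rw [Finset.sum_const, Finset.card_univ, Fintype.card_fin, nsmul_eq_mul]
          field_simp
  -- sum of squares
  have hsumsq : ∑ u : U, φ u * φ u = (Fintype.card U : ℂ) := by
    rw [← horthog]
    exact Finset.sum_congr rfl fun u _ => by rw [hφinv]
  -- main identity
  have hmain : ∀ a : U, ∑ u : U, φ u * φ (a * u)
      = (Fintype.card U : ℂ) * φ a / φ 1 := by
    intro a
    set Z : Module.End ℂ W := ∑ u : U, φ u • τ u with hZ
    have hZcomm : ∀ v : U, τ v * Z = Z * τ v := by
      intro v
      have h1 : τ v * Z = ∑ u : U, φ u • τ (v * u) := by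
        rw [hZ, Finset.mul_sum]
        refine Finset.sum_congr rfl fun u _ => ?_
        rw [map_mul τ, mul_smul_comm]
      have h2 : Z * τ v = ∑ u : U, φ u • τ (u * v) := by
        rw [hZ, Finset.sum_mul]
        refine Finset.sum_congr rfl fun u _ => ?_
        rw [map_mul τ, smul_mul_assoc]
      rw [h1, h2]
      refine Fintype.sum_equiv ((MulAut.conj v).toEquiv) _ _ (fun u => ?_)
      simp only [MulEquiv.toEquiv_eq_coe, MulEquiv.coe_toEquiv, MulAut.conj_apply]
      have hφc : φ (v * u * v⁻¹) = φ u := by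
        rw [hcomm (v * u) v⁻¹, inv_mul_cancel_left]
      rw [hφc]
      congr 2
      group
    have hZtr : trace ℂ W Z = (Fintype.card U : ℂ) := by
      rw [hZ, map_sum]
      rw [Finset.sum_congr rfl fun u _ => (map_smul (trace ℂ W) (φ u) (τ u) : _)]
      rw [← hsumsq]
      exact Finset.sum_congr rfl fun u _ => by rw [smul_eq_mul, htr]
    have hZeq : Z = ((Fintype.card U : ℂ) / n) • 1 := by
      rw [schur Z hZcomm, hZtr]
    have h3 : τ a * Z = ∑ u : U, φ u • τ (a * u) := by
      rw [hZ, Finset.mul_sum]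
      refine Finset.sum_congr rfl fun u _ => ?_
      rw [map_mul τ, mul_smul_comm]
    have h4 : trace ℂ W (τ a * Z) = ∑ u : U, φ u * φ (a * u) := by
      rw [h3, map_sum]
      refine Finset.sum_congr rfl fun u _ => ?_
      rw [map_smul, smul_eq_mul, ← htr]
    have h5 : trace ℂ W (τ a * Z) = (Fintype.card U : ℂ) / n * φ a := by
      rw [hZeq, mul_smul_comm, map_smul, mul_one, smul_eq_mul, htr]
    rw [← h4, h5, hφ1]
    ring
  exact ⟨hcomm, hφ1ne, hsumsq, hmain⟩

lemma charOneNeZero {U : Type} [Group U] (φ : U → ℂ) (hφ : IsIrrChar U φ) : φ 1 ≠ 0 := by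
  obtain ⟨W, iA, iM, iF, τ, hnt, hsim, htr⟩ := hφ
  have hφ1 : φ 1 = (Module.finrank ℂ W : ℂ) := by
    rw [htr, map_one, LinearMap.trace_one]
  rw [hφ1]
  exact_mod_cast Nat.cast_ne_zero.mpr (Module.finrank_pos (R := ℂ) (M := W)).ne'

/-- Let `G = U ≀ C₂`, `N = U × U`, `H = {1,t}{(u,u)}`, and let `V` be
an irreducible real `G`-inner-product space containing a nonzero `H`-fixed vector `w`,
whose (irreducible) complex character `χ` restricts to `φ × φ` on `N` with
`φ = φ̄ ∈ Irr U` and `χ(t(u,v)) = ν₂(φ)·φ(uv)`. Then for every `n = (x,y) ∈ N`: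
`⟨w·n, w⟩/⟨w,w⟩ = φ(x⁻¹y)/φ(1)`. -/
theorem stmt19 {U : Type} [Group U] [Finite U]
    {V : Type} [NormedAddCommGroup V] [InnerProductSpace ℝ V] [FiniteDimensional ℝ V]
    (ρ : Representation ℝ (Wr U) V)
    (horth : ∀ g (u v : V), ⟪ρ g u, ρ g v⟫_ℝ = ⟪u, v⟫_ℝ)
    (hnt : Nontrivial V)
    (hsimple : ∀ W : Submodule ℝ V, (∀ g, ∀ x ∈ W, ρ g x ∈ W) → W = ⊥ ∨ W = ⊤)
    (w : V) (hw : w ≠ 0) (hwfix : ∀ h ∈ Hdiag U, ρ h w = w)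
    -- the complex character `χ` of `V`:
    (χ : Wr U → ℂ)
    (hχ : ∀ g, χ g = ((LinearMap.trace ℝ V (ρ g) : ℝ) : ℂ))
    (hχirr : IsIrrChar (Wr U) χ)
    (φ : U → ℂ) (hφ : IsIrrChar U φ)
    (hφreal : φ = fun u => (starRingEnd ℂ) (φ u))
    (hres : ∀ u v : U, χ (SemidirectProduct.inl (u, v)) = φ u * φ v)
    (ht : ∀ u v : U, χ (tEl U * SemidirectProduct.inl (u, v))
      = ((Nat.card U : ℂ)⁻¹ * ∑ᶠ z : U, φ (z ^ 2)) * φ (u * v)) :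
    ∀ x y : U,
      ((⟪ρ (SemidirectProduct.inl (x, y)) w, w⟫_ℝ / ⟪w, w⟫_ℝ : ℝ) : ℂ)
        = φ (x⁻¹ * y) / φ 1 := by
  intro x y
  classical
  cases nonempty_fintype U
  set m : ℕ := Fintype.card U with hm
  have hm0 : (m : ℝ) ≠ 0 := Nat.cast_ne_zero.mpr Fintype.card_ne_zero
  have hm0' : (m : ℂ) ≠ 0 := Nat.cast_ne_zero.mpr Fintype.card_ne_zero
  -- trace is invariant under inversion, via orthogonality
  have htrinv : ∀ g : Wr U, LinearMap.trace ℝ V (ρ g⁻¹) = LinearMap.trace ℝ V (ρ g) := by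
    intro g
    set b := stdOrthonormalBasis ℝ V with hb
    have key : LinearMap.toMatrix b.toBasis b.toBasis (ρ g⁻¹)
        = Matrix.transpose (LinearMap.toMatrix b.toBasis b.toBasis (ρ g)) := by
      ext i j
      rw [Matrix.transpose_apply, LinearMap.toMatrix_apply, LinearMap.toMatrix_apply,
        b.coe_toBasis, b.coe_toBasis_repr_apply, b.coe_toBasis_repr_apply,
        b.repr_apply_apply, b.repr_apply_apply]
      calc ⟪b i, ρ g⁻¹ (b j)⟫_ℝ = ⟪ρ g (b i), ρ g (ρ g⁻¹ (b j))⟫_ℝ := (horth g _ _).symm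
        _ = ⟪ρ g (b i), b j⟫_ℝ := by
            congr 1
            rw [← Module.End.mul_apply, ← map_mul ρ, mul_inv_cancel, map_one,
              Module.End.one_apply]
        _ = ⟪b j, ρ g (b i)⟫_ℝ := real_inner_comm _ _
    rw [LinearMap.trace_eq_matrix_trace ℝ b.toBasis, LinearMap.trace_eq_matrix_trace ℝ b.toBasis,
      key, Matrix.trace_transpose]
  have hχinv : ∀ g : Wr U, χ g⁻¹ = χ g := by
    intro g; rw [hχ, hχ, htrinv]
  have hφ1ne : φ 1 ≠ 0 := charOneNeZero φ hφ
  -- φ is invariant under inversion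
  have hφinv : ∀ u : U, φ u⁻¹ = φ u := by
    intro u
    have h2 : (SemidirectProduct.inl ((u, 1) : U × U) : Wr U)⁻¹
        = SemidirectProduct.inl ((u⁻¹, 1) : U × U) := by
      rw [← map_inv]
      norm_num
    have h1 := hχinv (SemidirectProduct.inl ((u, 1) : U × U))
    rw [h2, hres, hres] at h1
    exact mul_right_cancel₀ hφ1ne h1
  obtain ⟨hcommφ, _, hsumsq, hmainid⟩ := keyCharIdentity φ hφ hφinv
  -- the fixed vector
  have hfix : ∀ u : U, ρ (SemidirectProduct.inl (u, u)) w = w := fun u =>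
    hwfix _ (Subgroup.subset_closure (Or.inr ⟨u, rfl⟩))
  -- the averaging projection over the diagonal
  set P : Module.End ℝ V := (m : ℝ)⁻¹ • ∑ u : U, ρ (SemidirectProduct.inl (u, u)) with hP
  have hPapply : ∀ v : V,
      P v = (m : ℝ)⁻¹ • ∑ u : U, ρ (SemidirectProduct.inl (u, u)) v := by
    intro v; rw [hP]; simp [LinearMap.sum_apply]
  have hPw : P w = w := by
    rw [hPapply, Finset.sum_congr rfl fun u _ => hfix u, Finset.sum_const, Finset.card_univ,
      ← Nat.cast_smul_eq_nsmul ℝ, smul_smul, inv_mul_cancel₀ hm0, one_smul]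
  have hmulP : ∀ a : U, ρ (SemidirectProduct.inl (a, a)) * P = P := by
    intro a
    rw [hP, mul_smul_comm, Finset.mul_sum]
    congr 1
    have hterm : ∀ u : U, ρ (SemidirectProduct.inl (a, a)) * ρ (SemidirectProduct.inl (u, u))
        = ρ (SemidirectProduct.inl (a * u, a * u)) := by
      intro u
      rw [← map_mul ρ]
      congr 1
    rw [Finset.sum_congr rfl fun u _ => hterm u]
    exact Fintype.sum_equiv (Equiv.mulLeft a) _ _ (fun u => rfl)
  have hPP : P * P = P := by
    calc P * P = (m : ℝ)⁻¹ • ∑ u : U, (ρ (SemidirectProduct.inl (u, u)) * P) := by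
          rw [hP, smul_mul_assoc, Finset.sum_mul]
      _ = P := by
          rw [Finset.sum_congr rfl fun u _ => hmulP u, Finset.sum_const, Finset.card_univ,
            ← Nat.cast_smul_eq_nsmul ℝ, smul_smul, inv_mul_cancel₀ hm0, one_smul]
  -- trace of P is 1
  have hcast : ∀ g : Wr U, ((LinearMap.trace ℝ V (ρ g) : ℝ) : ℂ) = χ g := fun g => (hχ g).symm
  have htraceP : LinearMap.trace ℝ V P = 1 := by
    have h1 : LinearMap.trace ℝ V P
        = (m : ℝ)⁻¹ * ∑ u : U, LinearMap.trace ℝ V (ρ (SemidirectProduct.inl (u, u))) := by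
      rw [hP, map_smul, map_sum, smul_eq_mul]
    have h2 : ((LinearMap.trace ℝ V P : ℝ) : ℂ) = ((1 : ℝ) : ℂ) := by
      rw [h1]
      push_cast
      rw [Finset.sum_congr rfl fun u (_ : u ∈ Finset.univ) => (hcast _).trans (hres u u),
        hsumsq]
      field_simp
      simp [hm]
    exact_mod_cast h2
  -- P is a projection onto a line spanned by w
  have hproj : LinearMap.IsProj (LinearMap.range P) P := by
    constructor
    · intro v; exact LinearMap.mem_range_self P v
    · rintro v ⟨z, rfl⟩
      rw [← Module.End.mul_apply, hPP]
  have hrank : Module.finrank ℝ (LinearMap.range P) = 1 := by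
    have h := hproj.trace
    rw [htraceP] at h
    exact_mod_cast h.symm
  have hwmem : w ∈ LinearMap.range P := ⟨w, hPw⟩
  have hrange : LinearMap.range P = Submodule.span ℝ {w} := by
    symm
    apply Submodule.eq_of_le_of_finrank_le
    · rw [Submodule.span_le, Set.singleton_subset_iff]; exact hwmem
    · rw [hrank, finrank_span_singleton hw]
  -- the matrix coefficient equals the normalized trace
  set A : Module.End ℝ V := ρ (SemidirectProduct.inl (x, y)) with hA
  set c : ℝ := LinearMap.trace ℝ V (A * P) with hc
  obtain ⟨α, hα'⟩ : ∃ a : ℝ, a • w = P (A w) := by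
    have hmem : P (A w) ∈ Submodule.span ℝ {w} := hrange ▸ LinearMap.mem_range_self P (A w)
    exact Submodule.mem_span_singleton.mp hmem
  have hα : P (A w) = α • w := hα'.symm
  have hPAP : P * A * P = α • P := by
    ext v
    obtain ⟨β, hβ'⟩ : ∃ a : ℝ, a • w = P v :=
      Submodule.mem_span_singleton.mp (hrange ▸ LinearMap.mem_range_self P v)
    have hβ : P v = β • w := hβ'.symm
    simp only [Module.End.mul_apply, LinearMap.smul_apply]
    rw [hβ, map_smul, map_smul, hα]
    exact smul_comm β α w
  have hαc : α = c := by
    have h1 : LinearMap.trace ℝ V (P * A * P) = α * LinearMap.trace ℝ V P := by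
      rw [hPAP, map_smul, smul_eq_mul]
    have h2 : LinearMap.trace ℝ V (P * A * P) = c := by
      rw [mul_assoc, LinearMap.trace_mul_comm, mul_assoc, hPP, hc]
    rw [htraceP, mul_one] at h1
    rw [← h1, h2]
  -- inner product identities
  have hPinner : ∀ v : V, ⟪P v, w⟫_ℝ = ⟪v, w⟫_ℝ := by
    intro v
    rw [hPapply, real_inner_smul_left, sum_inner]
    have hterm : ∀ u : U, ⟪ρ (SemidirectProduct.inl (u, u)) v, w⟫_ℝ = ⟪v, w⟫_ℝ := by
      intro u
      conv_lhs => rw [← hfix u]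
      exact horth _ _ _
    rw [Finset.sum_congr rfl fun u _ => hterm u, Finset.sum_const, Finset.card_univ,
      nsmul_eq_mul, ← mul_assoc, inv_mul_cancel₀ hm0, one_mul]
  have hkey : ⟪A w, w⟫_ℝ = c * ⟪w, w⟫_ℝ := by
    have h1 : ⟪A w, w⟫_ℝ = ⟪P (A w), w⟫_ℝ := (hPinner _).symm
    rw [h1, hα, hαc, real_inner_smul_left]
  have hwin : ⟪w, w⟫_ℝ ≠ 0 := inner_self_ne_zero.mpr hw
  have hdiv : ⟪A w, w⟫_ℝ / ⟪w, w⟫_ℝ = c := by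
    rw [hkey, mul_div_assoc, div_self hwin, mul_one]
  rw [hdiv]
  -- compute c via the character
  have h1 : A * P = (m : ℝ)⁻¹ • ∑ u : U, ρ (SemidirectProduct.inl (x * u, y * u)) := by
    rw [hA, hP, mul_smul_comm, Finset.mul_sum]
    congr 1
    refine Finset.sum_congr rfl fun u _ => ?_
    rw [← map_mul ρ]
    congr 1
  have h2 : ((c : ℝ) : ℂ) = (m : ℂ)⁻¹ * ∑ u : U, φ (x * u) * φ (y * u) := by
    rw [hc, h1, map_smul, map_sum, smul_eq_mul]
    push_cast
    congr 1
    refine Finset.sum_congr rfl fun u _ => ?_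
    rw [hcast, hres]
  have h3 : ∑ u : U, φ (x * u) * φ (y * u) = ∑ u : U, φ u * φ ((y * x⁻¹) * u) := by
    refine (Fintype.sum_equiv (Equiv.mulLeft x⁻¹) _ _ (fun u => ?_)).symm
    simp only [Equiv.coe_mulLeft]
    rw [mul_inv_cancel_left, mul_assoc]
  rw [h2, h3, hmainid (y * x⁻¹), hcommφ y x⁻¹]
  rw [mul_div_assoc, ← mul_assoc, inv_mul_cancel₀ hm0', one_mul]
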